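/- Let n \u2265 1 and let P_n in M_n(\u2102) be the matrix all of whose entries equal 1/n (a rank-one orthogonal projection). Then for every partial isometry v in M_n(\u2102) whose diagonal entries are all zero, the operator norm satisfies \u2016P_n - v\u2016 \u2265 1/3. -/

import Mathlib

open Matrix
open scoped Matrix.Norms.L2Operator InnerProductSpace

set_option maxHeartbeats 1000000

/-- Let `Pₙ ∈ Mₙ(ℂ)` be the rank-one projection all of whose entries are `1/n`.  Then every
partial isometry `v` with zero diagonal satisfies `‖Pₙ - v‖ ≥ 1/3` in the operator norm
induced by the Euclidean norm on `ℂⁿ`. -/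
theorem dist_partial_isometry_to_averaging_projection {n : ℕ} (hn : 1 ≤ n)
    (P : Matrix (Fin n) (Fin n) ℂ)
    (hP : ∀ k l : Fin n, P k l = 1 / (n : ℂ))
    (v : Matrix (Fin n) (Fin n) ℂ)
    (hv : v * vᴴ * v = v)
    (hdiag : ∀ k : Fin n, v k k = 0) :
    (1 : ℝ) / 3 ≤ ‖P - v‖ := by
  by_contra hcon
  push_neg at hcon
  set t : ℝ := ‖P - v‖ with htdef
  have ht0 : 0 ≤ t := norm_nonneg _
  have hnR : (0:ℝ) < (n:ℝ) := by exact_mod_cast hn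
  have hnC : (n:ℂ) ≠ 0 := by
    simpa using (show ((n:ℝ) : ℂ) ≠ 0 by exact_mod_cast hnR.ne')
  have hs0 : (0:ℝ) < Real.sqrt n := Real.sqrt_pos.2 hnR
  set toE : (Fin n → ℂ) ≃ EuclideanSpace ℂ (Fin n) :=
    (WithLp.equiv 2 (Fin n → ℂ)).symm with htoE
  set c : ℂ := ((Real.sqrt n : ℝ) : ℂ)⁻¹ with hc
  set ξ : Fin n → ℂ := fun _ => c with hξ
  -- norm of ξ is 1
  have hξnorm : ‖toE ξ‖ = 1 := by
    rw [EuclideanSpace.norm_eq]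
    have h1 : ∀ i : Fin n, ‖toE ξ i‖ ^ 2 = (n:ℝ)⁻¹ := by
      intro i
      have : toE ξ i = c := rfl
      rw [this, hc]
      rw [norm_inv, Complex.norm_real, Real.norm_eq_abs, abs_of_pos hs0]
      rw [inv_pow, Real.sq_sqrt hnR.le]
    rw [Finset.sum_congr rfl (fun i _ => h1 i)]
    rw [Finset.sum_const, Finset.card_univ, Fintype.card_fin, nsmul_eq_mul]
    rw [mul_inv_cancel₀ hnR.ne', Real.sqrt_one]
  -- P fixes ξ
  have hPξ : P *ᵥ ξ = ξ := by
    funext k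
    show ∑ l, P k l * ξ l = ξ k
    simp only [hP, hξ]
    rw [Finset.sum_const, Finset.card_univ, Fintype.card_fin, nsmul_eq_mul]
    field_simp
  -- P kills vectors with zero coordinate-sum
  have hPx0 : ∀ x : Fin n → ℂ, (∑ i, x i) = 0 → P *ᵥ x = 0 := by
    intro x hx
    funext k
    show ∑ l, P k l * x l = 0
    simp only [hP]
    rw [← Finset.mul_sum, hx, mul_zero]
  -- operator norm bounds
  have hop : ∀ x : Fin n → ℂ, ‖toE ((P - v) *ᵥ x)‖ ≤ t * ‖toE x‖ := by
    intro x
    exact Matrix.l2_opNorm_mulVec (P - v) (toE x)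
  have hPH : Pᴴ = P := by
    ext k l
    simp only [conjTranspose_apply, hP]
    simp
  have hopH : ∀ x : Fin n → ℂ, ‖toE ((P - vᴴ) *ᵥ x)‖ ≤ t * ‖toE x‖ := by
    intro x
    have h := Matrix.l2_opNorm_mulVec (P - v)ᴴ (toE x)
    rw [Matrix.l2_opNorm_conjTranspose] at h
    rw [conjTranspose_sub, hPH] at h
    exact h
  set ζ : Fin n → ℂ := v *ᵥ ξ with hζ
  set η : Fin n → ℂ := vᴴ *ᵥ ξ with hη
  have h1 : ‖toE ξ - toE ζ‖ ≤ t := by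
    have h := hop ξ
    rw [sub_mulVec, hPξ, hξnorm, mul_one] at h
    change ‖toE (ξ - ζ)‖ ≤ t
    exact h
  have h2 : ‖toE ξ - toE η‖ ≤ t := by
    have h := hopH ξ
    rw [sub_mulVec, hPξ, hξnorm, mul_one] at h
    change ‖toE (ξ - η)‖ ≤ t
    exact h
  have hζnorm : 1 - t ≤ ‖toE ζ‖ := by
    have := norm_sub_norm_le (toE ξ) (toE ζ)
    rw [hξnorm] at this
    linarith
  have hηnorm : 1 - t ≤ ‖toE η‖ := by
    have := norm_sub_norm_le (toE ξ) (toE η)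
    rw [hξnorm] at this
    linarith
  -- v is small on vectors with zero coordinate-sum
  have hsmall : ∀ x : Fin n → ℂ, (∑ i, x i) = 0 → ‖toE (v *ᵥ x)‖ ≤ t * ‖toE x‖ := by
    intro x hx
    have h := hop x
    rw [sub_mulVec, hPx0 x hx, zero_sub] at h
    change ‖-toE (v *ᵥ x)‖ ≤ t * ‖toE x‖ at h
    rw [norm_neg] at h
    exact h
  set Q : Matrix (Fin n) (Fin n) ℂ := vᴴ * v with hQ
  have hQQ : Q * Q = Q := by
    have : Q * Q = vᴴ * (v * vᴴ * v) := by rw [hQ]; noncomm_ring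
    rw [this, hv]
  have hvQ : v * Q = v := by
    rw [hQ, ← mul_assoc]; exact hv
  -- v preserves norms on the range of Q
  have hiso : ∀ x : Fin n → ℂ, Q *ᵥ x = x → ‖toE (v *ᵥ x)‖ = ‖toE x‖ := by
    intro x hx
    have hinner : ⟪toE (v *ᵥ x), toE (v *ᵥ x)⟫_ℂ = ⟪toE x, toE x⟫_ℂ := by
      change (v *ᵥ x) ⬝ᵥ star (v *ᵥ x) = x ⬝ᵥ star x
      rw [dotProduct_comm, dotProduct_comm x]
      rw [star_mulVec, ← Matrix.dotProduct_mulVec, Matrix.mulVec_mulVec, hx]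
    have h1 := inner_self_eq_norm_sq (𝕜 := ℂ) (toE (v *ᵥ x))
    have h2 := inner_self_eq_norm_sq (𝕜 := ℂ) (toE x)
    have h3 : ‖toE (v *ᵥ x)‖ ^ 2 = ‖toE x‖ ^ 2 := by rw [← h1, ← h2, hinner]
    rw [← Real.sqrt_sq (norm_nonneg (toE (v *ᵥ x))), h3, Real.sqrt_sq (norm_nonneg _)]
  -- kernel fact: fixed vectors of Q with zero coordinate-sum vanish
  have hker : ∀ x : Fin n → ℂ, Q *ᵥ x = x → (∑ i, x i) = 0 → x = 0 := by
    intro x hx hsum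
    have h1 := hiso x hx
    have h2 := hsmall x hsum
    rw [h1] at h2
    have h3 : (1 - t) * ‖toE x‖ ≤ 0 := by nlinarith
    have h4 : ‖toE x‖ ≤ 0 := by nlinarith
    have h5 : toE x = 0 := by rwa [norm_le_zero_iff] at h4
    funext i
    exact congrFun (congrArg (WithLp.equiv 2 (Fin n → ℂ)) h5) i
  set u₀ : Fin n → ℂ := Q *ᵥ ξ with hu₀
  have hQu₀ : Q *ᵥ u₀ = u₀ := by
    rw [hu₀, Matrix.mulVec_mulVec, hQQ]
  have hvu₀ : v *ᵥ u₀ = ζ := by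
    rw [hu₀, Matrix.mulVec_mulVec, hvQ, hζ]
  have hζne : ζ ≠ 0 := by
    intro h0
    have : ‖toE ζ‖ = 0 := by rw [h0, htoE, WithLp.equiv_symm_apply, WithLp.toLp_zero, norm_zero]
    rw [this] at hζnorm
    linarith
  set s : ℂ := ∑ i, u₀ i with hs
  have hsne : s ≠ 0 := by
    intro h0
    have := hker u₀ hQu₀ (by rw [← hs]; exact h0)
    rw [this, Matrix.mulVec_zero] at hvu₀
    exact hζne hvu₀.symm
  -- the rank-one structure
  have hC : ∀ x : Fin n → ℂ, v *ᵥ x = ((∑ i, (Q *ᵥ x) i) / s) • ζ := by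
    intro x
    set cx : ℂ := (∑ i, (Q *ᵥ x) i) / s with hcx
    have hz : Q *ᵥ x - cx • u₀ = 0 := by
      apply hker
      · rw [Matrix.mulVec_sub, Matrix.mulVec_mulVec, hQQ, Matrix.mulVec_smul, hQu₀]
      · have : ∑ i, (Q *ᵥ x - cx • u₀) i = (∑ i, (Q *ᵥ x) i) - cx * s := by
          simp only [Pi.sub_apply, Pi.smul_apply, smul_eq_mul, Finset.sum_sub_distrib,
            ← Finset.mul_sum, hs]
        rw [this, hcx, div_mul_cancel₀ _ hsne, sub_self]
    have hQx : Q *ᵥ x = cx • u₀ := by rwa [sub_eq_zero] at hz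
    calc v *ᵥ x = (v * Q) *ᵥ x := by rw [hvQ]
      _ = v *ᵥ (Q *ᵥ x) := by rw [← Matrix.mulVec_mulVec]
      _ = v *ᵥ (cx • u₀) := by rw [hQx]
      _ = cx • (v *ᵥ u₀) := by rw [Matrix.mulVec_smul]
      _ = cx • ζ := by rw [hvu₀]
  set m : Fin n → ℂ := fun l => (∑ i, Q i l) / s with hm
  have hentry : ∀ k l, v k l = m l * ζ k := by
    intro k l
    have h := congrFun (hC (Pi.single l 1)) k
    rw [Matrix.mulVec_single_one] at h
    simp only [col_apply] at h
    rw [Matrix.mulVec_single_one] at h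
    simp only [col_apply] at h
    rw [h, hm, Pi.smul_apply, smul_eq_mul]
  -- the vector η is proportional to the conjugate of m
  set γ : ℂ := ∑ l, (starRingEnd ℂ) (ζ l) * ξ l with hγ
  have hηk : ∀ k, η k = (starRingEnd ℂ) (m k) * γ := by
    intro k
    show ∑ l, vᴴ k l * ξ l = (starRingEnd ℂ) (m k) * γ
    rw [hγ, Finset.mul_sum]
    apply Finset.sum_congr rfl
    intro l _
    simp only [conjTranspose_apply, hentry l k, starRingEnd_apply, star_mul']
    ring
  -- orthogonality of η and ζ
  have horth : ⟪toE η, toE ζ⟫_ℂ = 0 := by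
    change ζ ⬝ᵥ star η = 0
    rw [dotProduct_comm]
    show ∑ k, star (η k) * ζ k = 0
    apply Finset.sum_eq_zero
    intro k _
    have hk : m k * ζ k = 0 := by rw [← hentry k k]; exact hdiag k
    rw [hηk k]
    show star ((starRingEnd ℂ) (m k) * γ) * ζ k = 0
    simp only [starRingEnd_apply, star_mul', star_star]
    calc m k * star γ * ζ k = star γ * (m k * ζ k) := by ring
      _ = 0 := by rw [hk, mul_zero]
  -- Pythagoras and the final contradiction
  have hpyth : ‖toE ζ - toE η‖ ^ 2 = ‖toE ζ‖ ^ 2 + ‖toE η‖ ^ 2 := by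
    have h := @norm_sub_sq ℂ _ _ _ _ (toE ζ) (toE η)
    have hz : ⟪toE ζ, toE η⟫_ℂ = 0 := by
      rw [← inner_conj_symm, horth, map_zero]
    rw [hz] at h
    simp at h
    linarith
  have hdiff : ‖toE ζ - toE η‖ ≤ 2 * t := by
    calc ‖toE ζ - toE η‖ ≤ ‖toE ζ - toE ξ‖ + ‖toE ξ - toE η‖ :=
          norm_sub_le_norm_sub_add_norm_sub _ _ _
      _ = ‖toE ξ - toE ζ‖ + ‖toE ξ - toE η‖ := by rw [norm_sub_rev]
      _ ≤ t + t := add_le_add h1 h2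
      _ = 2 * t := by ring
  have hsq : ‖toE ζ - toE η‖ ^ 2 ≤ (2 * t) ^ 2 := by
    have := norm_nonneg (toE ζ - toE η)
    nlinarith
  have hζsq : (1 - t) ^ 2 ≤ ‖toE ζ‖ ^ 2 := by nlinarith
  have hηsq : (1 - t) ^ 2 ≤ ‖toE η‖ ^ 2 := by nlinarith
  nlinarith
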